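/- Let b_1, …, b_m be nonzero vectors in ℤ^d and r_1, …, r_m real numbers, with hyperplanes H_i and closed half-spaces F_i, G_i as below, and let S ⊆ {1, …, m} be a circuit of the arrangement. Then there exists exactly one subset S⁺ ⊆ S such that (∩_{i∈S⁺} G_i) ∩ (∩_{j∈S∖S⁺} F_j) = ∅. -/

import Mathlib

open RealInnerProductSpace


/-- The affine hyperplane `H_i = {v ∈ ℝ^d : ⟨b_i, v⟩ + r_i = 0}`. -/
def hyperplane {m d : ℕ} (b : Fin m → Fin d → ℤ) (r : Fin m → ℝ) (i : Fin m) :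
    Set (Fin d → ℝ) :=
  {v | (∑ k, (b i k : ℝ) * v k) + r i = 0}

/-- The closed half-space `F_i = {v ∈ ℝ^d : ⟨b_i, v⟩ + r_i ≥ 0}`. -/
def halfspaceF {m d : ℕ} (b : Fin m → Fin d → ℤ) (r : Fin m → ℝ) (i : Fin m) :
    Set (Fin d → ℝ) :=
  {v | 0 ≤ (∑ k, (b i k : ℝ) * v k) + r i}

/-- The closed half-space `G_i = {v ∈ ℝ^d : ⟨b_i, v⟩ + r_i ≤ 0}`. -/
def halfspaceG {m d : ℕ} (b : Fin m → Fin d → ℤ) (r : Fin m → ℝ) (i : Fin m) :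
    Set (Fin d → ℝ) :=
  {v | (∑ k, (b i k : ℝ) * v k) + r i ≤ 0}

lemma exists_dep (m d : ℕ) (b : Fin m → Fin d → ℤ) (r : Fin m → ℝ) (S : Finset (Fin m))
    (hcirc : (⋂ i ∈ S, hyperplane b r i) = ∅) :
    ∃ (μ : Fin m → ℝ) (c : ℝ), 0 < c ∧
      ∀ v : Fin d → ℝ, ∑ i ∈ S, μ i * ((∑ k, (b i k : ℝ) * v k) + r i) = c := by
  classical
  let L : (Fin d → ℝ) →ₗ[ℝ] EuclideanSpace ℝ (Fin m) :=
    { toFun := fun v => WithLp.toLp 2 (fun i => if i ∈ S then ∑ k, (b i k : ℝ) * v k else 0)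
      map_add' := by
        intro x y; ext i
        by_cases h : i ∈ S <;> simp [h, mul_add, Finset.sum_add_distrib]
      map_smul' := by
        intro c x; ext i
        by_cases h : i ∈ S <;> simp [h, Finset.mul_sum, mul_left_comm] }
  let w : EuclideanSpace ℝ (Fin m) := WithLp.toLp 2 (fun i => if i ∈ S then r i else 0)
  set U := LinearMap.range L with hU
  have hw : -w ∉ U := by
    rintro ⟨v, hv⟩
    have hv' : v ∈ ⋂ i ∈ S, hyperplane b r i := by
      simp only [Set.mem_iInter]
      intro i hi
      have h1 : L v i = -w i := congrArg (fun x : EuclideanSpace ℝ (Fin m) => x i) hv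
      simp only [L, w, hi, if_pos, LinearMap.coe_mk, AddHom.coe_mk, PiLp.toLp_apply] at h1
      simp only [hyperplane, Set.mem_setOf_eq]
      rw [h1]; ring
    rw [hcirc] at hv'
    exact hv'
  set lam : EuclideanSpace ℝ (Fin m) := -w - (U.orthogonalProjection (-w) : EuclideanSpace ℝ (Fin m)) with hlam
  have hlam_ne : lam ≠ 0 := by
    intro h
    apply hw
    have : -w = (U.orthogonalProjection (-w) : EuclideanSpace ℝ (Fin m)) := by
      have := sub_eq_zero.mp h; exact this
    rw [this]; exact (U.orthogonalProjection (-w)).2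
  have hperp : lam ∈ Uᗮ := Submodule.sub_starProjection_mem_orthogonal (K := U) (-w)
  have hdecomp : -w = (U.orthogonalProjection (-w) : EuclideanSpace ℝ (Fin m)) + lam := by
    rw [hlam]; abel
  have h0 : ⟪((U.orthogonalProjection (-w)) : EuclideanSpace ℝ (Fin m)), lam⟫ = 0 :=
    (Submodule.mem_orthogonal U lam).mp hperp _ (U.orthogonalProjection (-w)).2
  have h0' : ⟪lam, ((U.orthogonalProjection (-w)) : EuclideanSpace ℝ (Fin m))⟫ = 0 := by
    rw [real_inner_comm]; exact h0
  have hinner : ⟪lam, -w⟫ = ‖lam‖ ^ 2 := by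
    rw [hdecomp, inner_add_right, h0', zero_add, real_inner_self_eq_norm_sq]
  have hw2 : ∑ i, lam i * w i = -‖lam‖ ^ 2 := by
    have hin : ⟪lam, w⟫ = -‖lam‖ ^ 2 := by
      rw [inner_neg_right] at hinner; linarith
    rw [PiLp.inner_apply] at hin
    simp only [RCLike.inner_apply, conj_trivial] at hin
    rw [← hin]; exact Finset.sum_congr rfl fun i _ => mul_comm _ _
  have hcpos : (0:ℝ) < ‖lam‖ ^ 2 := pow_pos (norm_pos_iff.mpr hlam_ne) 2
  refine ⟨fun i => -(lam i), ‖lam‖ ^ 2, hcpos, ?_⟩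
  intro v
  have h1 : ∑ i ∈ S, lam i * (∑ k, (b i k : ℝ) * v k) = 0 := by
    have h0' : ⟪L v, lam⟫ = 0 :=
      (Submodule.mem_orthogonal U lam).mp hperp (L v) ⟨v, rfl⟩
    rw [PiLp.inner_apply] at h0'
    simp only [RCLike.inner_apply, conj_trivial] at h0'
    calc ∑ i ∈ S, lam i * (∑ k, (b i k : ℝ) * v k)
        = ∑ i ∈ S, L v i * lam i :=
          Finset.sum_congr rfl (fun i hi => by
            simp only [L, LinearMap.coe_mk, AddHom.coe_mk, PiLp.toLp_apply, if_pos hi]; ring)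
      _ = ∑ i, L v i * lam i :=
          Finset.sum_subset (Finset.subset_univ S) (fun i _ hi => by
            simp only [L, LinearMap.coe_mk, AddHom.coe_mk, PiLp.toLp_apply, if_neg hi, zero_mul])
      _ = 0 := by rw [← h0']; exact Finset.sum_congr rfl fun i _ => mul_comm _ _
  have h2 : ∑ i ∈ S, lam i * r i = -‖lam‖ ^ 2 := by
    calc ∑ i ∈ S, lam i * r i
        = ∑ i ∈ S, lam i * w i :=
          Finset.sum_congr rfl (fun i hi => by simp only [w, PiLp.toLp_apply, if_pos hi])
      _ = ∑ i, lam i * w i :=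
          Finset.sum_subset (Finset.subset_univ S) (fun i _ hi => by
            simp only [w, PiLp.toLp_apply, if_neg hi, mul_zero])
      _ = -‖lam‖ ^ 2 := hw2
  calc ∑ i ∈ S, (-(lam i)) * ((∑ k, (b i k : ℝ) * v k) + r i)
      = -((∑ i ∈ S, lam i * (∑ k, (b i k : ℝ) * v k)) + ∑ i ∈ S, lam i * r i) := by
        rw [← Finset.sum_add_distrib, ← Finset.sum_neg_distrib]
        exact Finset.sum_congr rfl (fun i _ => by ring)
    _ = ‖lam‖ ^ 2 := by rw [h1, h2]; ring

/-- Let `b_1, …, b_m` be nonzero vectors in `ℤ^d`, `r_1, …, r_m` real numbers,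
with hyperplanes `H_i` and closed half-spaces `F_i`, `G_i` as above, and let
`S ⊆ {1, …, m}` be a circuit of the arrangement (i.e. `∩_{i∈S} H_i = ∅` while
`∩_{i∈S'} H_i ≠ ∅` for every proper subset `S' ⊊ S`).  Then there exists exactly one
subset `S⁺ ⊆ S` such that `(∩_{i∈S⁺} G_i) ∩ (∩_{j∈S∖S⁺} F_j) = ∅`. -/
theorem circuit_unique_splitting (m d : ℕ) (b : Fin m → Fin d → ℤ) (hb : ∀ i, b i ≠ 0)
    (r : Fin m → ℝ) (S : Finset (Fin m))
    (hcirc : (⋂ i ∈ S, hyperplane b r i) = ∅)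
    (hmin : ∀ S' : Finset (Fin m), S' ⊂ S → (⋂ i ∈ S', hyperplane b r i) ≠ ∅) :
    ∃! Sp : Finset (Fin m), Sp ⊆ S ∧
      ((⋂ i ∈ Sp, halfspaceG b r i) ∩ (⋂ j ∈ S \ Sp, halfspaceF b r j)) = ∅ := by
  classical
  obtain ⟨μ, c, hc, hkey⟩ := exists_dep m d b r S hcirc
  -- the witness point for each i0 ∈ S
  have witness : ∀ i0 ∈ S, ∃ v : Fin d → ℝ,
      (∀ i ∈ S, i ≠ i0 → (∑ k, (b i k : ℝ) * v k) + r i = 0) ∧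
      μ i0 * ((∑ k, (b i0 k : ℝ) * v k) + r i0) = c := by
    intro i0 hi0
    have hsub : S.erase i0 ⊂ S := Finset.erase_ssubset hi0
    obtain ⟨v, hv⟩ := Set.nonempty_iff_ne_empty.mpr (hmin _ hsub)
    have hv' : ∀ i ∈ S, i ≠ i0 → (∑ k, (b i k : ℝ) * v k) + r i = 0 := by
      intro i hi hne
      have : v ∈ hyperplane b r i := by
        have := Set.mem_iInter₂.mp hv i (Finset.mem_erase.mpr ⟨hne, hi⟩)
        exact this
      exact this
    refine ⟨v, hv', ?_⟩
    have hsum := hkey v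
    rw [← Finset.add_sum_erase S _ hi0] at hsum
    have hz : ∑ i ∈ S.erase i0, μ i * ((∑ k, (b i k : ℝ) * v k) + r i) = 0 := by
      apply Finset.sum_eq_zero
      intro i hi
      rw [hv' i (Finset.mem_of_mem_erase hi) (Finset.ne_of_mem_erase hi), mul_zero]
    rw [hz, add_zero] at hsum
    exact hsum
  have hmu : ∀ i ∈ S, μ i ≠ 0 := by
    intro i hi hzero
    obtain ⟨v, -, hkey2⟩ := witness i hi
    rw [hzero, zero_mul] at hkey2
    exact hc.ne hkey2
  refine ⟨S.filter (fun i => 0 < μ i), ⟨Finset.filter_subset _ _, ?_⟩, ?_⟩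
  · -- the positive part gives an empty intersection
    by_contra hne
    obtain ⟨v, hvG, hvF⟩ := Set.nonempty_iff_ne_empty.mpr hne
    have hle : ∑ i ∈ S, μ i * ((∑ k, (b i k : ℝ) * v k) + r i) ≤ 0 := by
      apply Finset.sum_nonpos
      intro i hi
      by_cases hpos : 0 < μ i
      · have hiG : v ∈ halfspaceG b r i :=
          Set.mem_iInter₂.mp hvG i (Finset.mem_filter.mpr ⟨hi, hpos⟩)
        exact mul_nonpos_of_nonneg_of_nonpos hpos.le hiG
      · have hneg : μ i < 0 := lt_of_le_of_ne (not_lt.mp hpos) (hmu i hi)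
        have hiF : v ∈ halfspaceF b r i :=
          Set.mem_iInter₂.mp hvF i (Finset.mem_sdiff.mpr ⟨hi, by
            simp [Finset.mem_filter, hpos]⟩)
        exact mul_nonpos_of_nonpos_of_nonneg hneg.le hiF
    rw [hkey v] at hle
    exact absurd hle (not_le.mpr hc)
  · -- uniqueness
    intro Sp ⟨hSp, hempty⟩
    by_contra hne
    obtain ⟨i0, hi0⟩ : ∃ a, ¬(a ∈ Sp ↔ a ∈ S.filter (fun i => 0 < μ i)) := by
      by_contra h
      push_neg at h
      exact hne (Finset.ext fun a => h a)
    rw [iff_iff_implies_and_implies, not_and_or] at hi0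
    rcases hi0 with h | h
    · -- i0 ∈ Sp, μ i0 < 0
      push_neg at h
      obtain ⟨hi0Sp, hi0nf⟩ := h
      have hi0S : i0 ∈ S := hSp hi0Sp
      have hneg : μ i0 < 0 := by
        rcases lt_trichotomy (μ i0) 0 with h' | h' | h'
        · exact h'
        · exact absurd h' (hmu i0 hi0S)
        · exact absurd (Finset.mem_filter.mpr ⟨hi0S, h'⟩) hi0nf
      obtain ⟨v, hvz, hvkey⟩ := witness i0 hi0S
      have hf0 : (∑ k, (b i0 k : ℝ) * v k) + r i0 < 0 := by
        nlinarith
      have : v ∈ (⋂ i ∈ Sp, halfspaceG b r i) ∩ (⋂ j ∈ S \ Sp, halfspaceF b r j) := by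
        constructor
        · apply Set.mem_iInter₂.mpr
          intro i hi
          by_cases hii : i = i0
          · subst hii; exact hf0.le
          · exact le_of_eq (hvz i (hSp hi) hii)
        · apply Set.mem_iInter₂.mpr
          intro j hj
          obtain ⟨hjS, hjn⟩ := Finset.mem_sdiff.mp hj
          have hji : j ≠ i0 := fun h => hjn (h ▸ hi0Sp)
          exact ge_of_eq (hvz j hjS hji)
      rw [hempty] at this
      exact this
    · -- i0 ∈ filter, i0 ∉ Sp : μ i0 > 0
      push_neg at h
      obtain ⟨hi0f, hi0nSp⟩ := h
      obtain ⟨hi0S, hpos⟩ := Finset.mem_filter.mp hi0f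
      obtain ⟨v, hvz, hvkey⟩ := witness i0 hi0S
      have hf0 : 0 < (∑ k, (b i0 k : ℝ) * v k) + r i0 := by
        nlinarith
      have : v ∈ (⋂ i ∈ Sp, halfspaceG b r i) ∩ (⋂ j ∈ S \ Sp, halfspaceF b r j) := by
        constructor
        · apply Set.mem_iInter₂.mpr
          intro i hi
          have hii : i ≠ i0 := fun h => hi0nSp (h ▸ hi)
          exact le_of_eq (hvz i (hSp hi) hii)
        · apply Set.mem_iInter₂.mpr
          intro j hj
          obtain ⟨hjS, -⟩ := Finset.mem_sdiff.mp hj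
          by_cases hji : j = i0
          · subst hji; exact hf0.le
          · exact ge_of_eq (hvz j hjS hji)
      rw [hempty] at this
      exact this
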